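/- Noninterference for a simple while-free command language with tagged memories: if a command C is well-typed under a program counter pc and type environment Γ (mapping variables to rights), and M₁, M₂ are memories equivalent on low variables (variables x with Γ(x) low), then running C to termination from M₁ and from M₂ yields memories that are again equivalent on low variables. -/
import Mathlib


/-- Integer expressions: literals, variables, and `+`. -/
inductive AExp : Type
  | lit (n : ℤ)
  | var (x : ℕ)
  | add (a b : AExp)

/-- Evaluation of expressions over total integer memories. -/
def evalE (M : ℕ → ℤ) : AExp → ℤ
  | .lit n => n
  | .var x => M x
  | .add a b => evalE M a + evalE M b

/-- Security levels: `false` = low, `true` = high (`low ⊑ high`). -/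
abbrev Lvl := Bool

/-- The level of an expression under `Γ`: high iff some variable is high. -/
def levelOf (Γ : ℕ → Lvl) : AExp → Lvl
  | .lit _ => false
  | .var x => Γ x
  | .add a b => levelOf Γ a || levelOf Γ b

/-- While-free commands: skip, sequencing, assignment, equality conditional. -/
inductive Cmd : Type
  | skip
  | seq (c₁ c₂ : Cmd)
  | assign (x : ℕ) (e : AExp)
  | ite (e₁ e₂ : AExp) (c₁ c₂ : Cmd)

/-- The security type system. -/
inductive WT (Γ : ℕ → Lvl) : Lvl → Cmd → Prop
  | skip {pc} : WT Γ pc .skip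
  | seq {pc c₁ c₂} : WT Γ pc c₁ → WT Γ pc c₂ → WT Γ pc (.seq c₁ c₂)
  | assign {pc x e} : (levelOf Γ e || pc) ≤ Γ x → WT Γ pc (.assign x e)
  | ite {pc e₁ e₂ c₁ c₂} :
      WT Γ (pc || levelOf Γ e₁ || levelOf Γ e₂) c₁ →
      WT Γ (pc || levelOf Γ e₁ || levelOf Γ e₂) c₂ →
      WT Γ pc (.ite e₁ e₂ c₁ c₂)

/-- Standard big-step semantics over integer memories. -/
inductive BigStep : Cmd → (ℕ → ℤ) → (ℕ → ℤ) → Prop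
  | skip {M} : BigStep .skip M M
  | seq {c₁ c₂ M M' M''} :
      BigStep c₁ M M' → BigStep c₂ M' M'' → BigStep (.seq c₁ c₂) M M''
  | assign {x e M} : BigStep (.assign x e) M (Function.update M x (evalE M e))
  | iteTrue {e₁ e₂ c₁ c₂ M M'} :
      evalE M e₁ = evalE M e₂ → BigStep c₁ M M' →
      BigStep (.ite e₁ e₂ c₁ c₂) M M'
  | iteFalse {e₁ e₂ c₁ c₂ M M'} :
      evalE M e₁ ≠ evalE M e₂ → BigStep c₂ M M' →
      BigStep (.ite e₁ e₂ c₁ c₂) M M'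

/-- Low-equivalence of memories under `Γ`. -/
def LowEq (Γ : ℕ → Lvl) (M₁ M₂ : ℕ → ℤ) : Prop :=
  ∀ x, Γ x = false → M₁ x = M₂ x


lemma eval_lowEq {Γ M₁ M₂} (hlow : LowEq Γ M₁ M₂) (e : AExp)
    (he : levelOf Γ e = false) : evalE M₁ e = evalE M₂ e := by
  induction e with
  | lit n => rfl
  | var x => exact hlow x he
  | add a b iha ihb =>
    simp [levelOf, Bool.or_eq_false_iff] at he
    simp [evalE, iha he.1, ihb he.2]

lemma confinement {Γ C M M'} (hwt : WT Γ true C) (h : BigStep C M M') :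
    LowEq Γ M M' := by
  induction h with
  | skip => intro x _; rfl
  | seq h1 h2 ih1 ih2 =>
    cases hwt with
    | seq w1 w2 =>
      intro x hx; rw [ih1 w1 x hx, ih2 w2 x hx]
  | @assign x e M =>
    cases hwt with
    | assign hle =>
      have hxt : Γ x = true := by
        cases h : Γ x
        · rw [h] at hle; simp only [Bool.or_true] at hle; exact absurd hle (by decide)
        · rfl
      intro y hy
      have hne : y ≠ x := fun h => by rw [h, hxt] at hy; exact Bool.noConfusion hy
      simp [Function.update_of_ne hne]
  | iteTrue heq h ih =>
    cases hwt with
    | ite w1 w2 => exact ih (by simpa using w1)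
  | iteFalse hne h ih =>
    cases hwt with
    | ite w1 w2 => exact ih (by simpa using w2)

lemma noninterference' {Γ C M₁ M₂ M₁' M₂'}
    (hwt : WT Γ false C) (hlow : LowEq Γ M₁ M₂)
    (h₁ : BigStep C M₁ M₁') (h₂ : BigStep C M₂ M₂') :
    LowEq Γ M₁' M₂' := by
  induction C generalizing M₁ M₂ M₁' M₂' with
  | skip => cases h₁; cases h₂; exact hlow
  | seq c₁ c₂ ih1 ih2 =>
    cases hwt with
    | seq w1 w2 =>
      cases h₁ with
      | seq a1 a2 =>
        cases h₂ with
        | seq b1 b2 => exact ih2 w2 (ih1 w1 hlow a1 b1) a2 b2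
  | assign x e =>
    cases hwt with
    | assign hle =>
      cases h₁; cases h₂
      intro y hy
      rcases eq_or_ne y x with rfl | hne
      · simp only [Function.update_self]
        apply eval_lowEq hlow
        have hlvl : levelOf Γ e = false := by
          cases h : levelOf Γ e
          · rfl
          · rw [hy, h] at hle; exact absurd hle (by decide)
        exact hlvl
      · simp only [Function.update_of_ne hne]
        exact hlow y hy
  | ite e₁ e₂ c₁ c₂ ih1 ih2 =>
    cases hwt with
    | ite w1 w2 =>
      simp only [Bool.false_or] at w1 w2
      by_cases hl : (levelOf Γ e₁ || levelOf Γ e₂) = false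
      · -- low guard: same branch
        simp only [Bool.or_eq_false_iff] at hl
        have heq : (evalE M₁ e₁ = evalE M₁ e₂) ↔ (evalE M₂ e₁ = evalE M₂ e₂) := by
          rw [eval_lowEq hlow e₁ hl.1, eval_lowEq hlow e₂ hl.2]
        cases h₁ with
        | iteTrue t1 a =>
          cases h₂ with
          | iteTrue t2 b =>
            have w1' : WT Γ false c₁ := by simpa [hl.1, hl.2] using w1
            exact ih1 w1' hlow a b
          | iteFalse t2 b => exact absurd (heq.mp t1) t2
        | iteFalse t1 a =>
          cases h₂ with
          | iteTrue t2 b => exact absurd (heq.mpr t2) t1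
          | iteFalse t2 b =>
            have w2' : WT Γ false c₂ := by simpa [hl.1, hl.2] using w2
            exact ih2 w2' hlow a b
      · -- high guard: confinement
        have hl' : (levelOf Γ e₁ || levelOf Γ e₂) = true := by
          revert hl; cases (levelOf Γ e₁ || levelOf Γ e₂) <;> simp
        rw [hl'] at w1 w2
        have k1 : LowEq Γ M₁ M₁' := by
          cases h₁ with
          | iteTrue _ a => exact confinement w1 a
          | iteFalse _ a => exact confinement w2 a
        have k2 : LowEq Γ M₂ M₂' := by
          cases h₂ with
          | iteTrue _ b => exact confinement w1 b
          | iteFalse _ b => exact confinement w2 b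
        intro x hx
        rw [← k1 x hx, ← k2 x hx]
        exact hlow x hx

/-- Noninterference: a command well-typed under a low program counter maps
low-equivalent memories to low-equivalent memories. -/
theorem noninterference (Γ : ℕ → Lvl) (C : Cmd) (M₁ M₂ M₁' M₂' : ℕ → ℤ)
    (hwt : WT Γ false C) (hlow : LowEq Γ M₁ M₂)
    (h₁ : BigStep C M₁ M₁') (h₂ : BigStep C M₂ M₂') :
    LowEq Γ M₁' M₂' :=
  noninterference' hwt hlow h₁ h₂
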